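/- Let H : E → ℝ be smooth, β a closed smooth 1-form on E, f : E → ℝ smooth, and ζ a smooth vector field with L_ζ(α_H + β) = df (a weak Noether symmetry). Let U ⊆ E be an open set on which the elementary action ρ(x) = Σⱼ pⱼ ∂H/∂pⱼ(x) − H(x) is nonzero. Then the vector field ζ̃(x) = ζ(x) + ρ(x)⁻¹ (β(x)(ζ(x)) − f(x)) · Z_H(x) satisfies, on U, L_{ζ̃} α_H = 0 and α_H(x)(ζ̃(x)) = (α_H + β)(x)(ζ(x)) − f(x); i.e., ζ̃ is a Noether symmetry with the same conserved quantity as ζ. -/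

import Mathlib

noncomputable section
open scoped ContDiff

/-- The extended phase space `E = ℝ × ℝⁿ × ℝⁿ`, with points `x = (t, q, p)`. -/
abbrev EE (n : ℕ) : Type := ℝ × (Fin n → ℝ) × (Fin n → ℝ)

/-- The Poincaré–Cartan 1-form `α_H = p dq − H dt`:
`α_H(x)(τ̂, ξ̂, η̂) = ∑ i, pᵢ ξ̂ᵢ − H(x) τ̂`. -/
def pcForm {n : ℕ} (H : EE n → ℝ) (x : EE n) : EE n →L[ℝ] ℝ :=
  (∑ i, x.2.2 i • ((ContinuousLinearMap.proj i).comp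
      ((ContinuousLinearMap.fst ℝ (Fin n → ℝ) (Fin n → ℝ)).comp
        (ContinuousLinearMap.snd ℝ ℝ ((Fin n → ℝ) × (Fin n → ℝ))))))
    - H x • ContinuousLinearMap.fst ℝ ℝ ((Fin n → ℝ) × (Fin n → ℝ))

/-- The vector field `Z_H(x) = (1, ∂H/∂p(x), −∂H/∂q(x))` of Hamilton's equations. -/
def ZH {n : ℕ} (H : EE n → ℝ) (x : EE n) : EE n :=
  (1, fun i => fderiv ℝ H x (0, 0, Pi.single i 1),
      fun i => - fderiv ℝ H x (0, Pi.single i 1, 0))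

/-- The Lie derivative of a 1-form `α` along a vector field `ζ`:
`(L_ζ α)(x)(v) = (Dα(x)(ζ(x)))(v) + α(x)(Dζ(x)(v))`. -/
def lieDeriv {n : ℕ} (ζ : EE n → EE n) (α : EE n → (EE n →L[ℝ] ℝ)) (x : EE n) :
    EE n →L[ℝ] ℝ :=
  fderiv ℝ α x (ζ x) + (α x).comp (fderiv ℝ ζ x)

/-- The exterior derivative of a 1-form:
`dα(x)(u,v) = (Dα(x)u)(v) − (Dα(x)v)(u)`. -/
def extDerivOneForm {n : ℕ} (α : EE n → (EE n →L[ℝ] ℝ)) (x u v : EE n) : ℝ :=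
  fderiv ℝ α x u v - fderiv ℝ α x v u

/-- The elementary action `ρ(x) = ∑ⱼ pⱼ ∂H/∂pⱼ(x) − H(x)`. -/
def elemAction {n : ℕ} (H : EE n → ℝ) (x : EE n) : ℝ :=
  (∑ j, x.2.2 j * fderiv ℝ H x (0, 0, Pi.single j 1)) - H x

namespace NA
variable {n : ℕ}

def Lq (n : ℕ) (i : Fin n) : EE n →L[ℝ] ℝ :=
  (ContinuousLinearMap.proj i).comp
    ((ContinuousLinearMap.fst ℝ (Fin n → ℝ) (Fin n → ℝ)).comp
      (ContinuousLinearMap.snd ℝ ℝ ((Fin n → ℝ) × (Fin n → ℝ))))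

def Lp (n : ℕ) (i : Fin n) : EE n →L[ℝ] ℝ :=
  (ContinuousLinearMap.proj i).comp
    ((ContinuousLinearMap.snd ℝ (Fin n → ℝ) (Fin n → ℝ)).comp
      (ContinuousLinearMap.snd ℝ ℝ ((Fin n → ℝ) × (Fin n → ℝ))))

def Tc (n : ℕ) : EE n →L[ℝ] ℝ := ContinuousLinearMap.fst ℝ ℝ ((Fin n → ℝ) × (Fin n → ℝ))

def P (n : ℕ) : EE n →L[ℝ] (EE n →L[ℝ] ℝ) := ∑ i, (Lp n i).smulRight (Lq n i)

lemma P_apply (u v : EE n) : P n u v = ∑ i, u.2.2 i * v.2.1 i := by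
  simp [P, Lp, Lq, ContinuousLinearMap.sum_apply]

lemma pcForm_eq (H : EE n → ℝ) (x : EE n) : pcForm H x = P n x - H x • Tc n := by
  refine ContinuousLinearMap.ext fun v => ?_
  simp [pcForm, P, Lp, Lq, Tc, ContinuousLinearMap.sum_apply]

lemma pcForm_apply (H : EE n → ℝ) (x v : EE n) :
    pcForm H x v = (∑ i, x.2.2 i * v.2.1 i) - H x * v.1 := by
  rw [pcForm_eq]
  simp [P_apply, Tc]

lemma pcForm_ZH (H : EE n → ℝ) (x : EE n) : pcForm H x (ZH H x) = elemAction H x := by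
  rw [pcForm_apply]
  simp [ZH, elemAction]

lemma vec_decomp (v : EE n) :
    v = v.1 • ((1:ℝ), (0:Fin n → ℝ), (0:Fin n → ℝ))
      + (∑ i, v.2.1 i • ((0:ℝ), (Pi.single i 1 : Fin n → ℝ), (0:Fin n → ℝ)))
      + ∑ i, v.2.2 i • ((0:ℝ), (0:Fin n → ℝ), (Pi.single i 1 : Fin n → ℝ)) := by
  refine Prod.ext ?_ (Prod.ext ?_ ?_)
  · simp [Prod.fst_sum]
  · funext j
    simp [Prod.fst_sum, Prod.snd_sum, Finset.sum_apply, Pi.single_apply]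
  · funext j
    simp [Prod.fst_sum, Prod.snd_sum, Finset.sum_apply, Pi.single_apply]

lemma clm_decomp (L : EE n →L[ℝ] ℝ) (v : EE n) :
    L v = v.1 * L (1,0,0) + (∑ i, v.2.1 i * L (0, Pi.single i 1, 0))
      + ∑ i, v.2.2 i * L (0, 0, Pi.single i 1) := by
  conv_lhs => rw [vec_decomp v]
  rw [map_add, map_add, map_sum, map_sum, map_smul, smul_eq_mul]
  congr 1
  · congr 1
    exact Finset.sum_congr rfl fun i _ => by rw [map_smul, smul_eq_mul]
  · exact Finset.sum_congr rfl fun i _ => by rw [map_smul, smul_eq_mul]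

end NA

namespace NA2
open NA
variable {n : ℕ}

lemma hasFDerivAt_pcForm (H : EE n → ℝ) (x : EE n) (hH : DifferentiableAt ℝ H x) :
    HasFDerivAt (pcForm H) (P n - (fderiv ℝ H x).smulRight (Tc n)) x := by
  have h1 : HasFDerivAt (fun y : EE n => P n y) (P n) x := (P n).hasFDerivAt
  have h2 : HasFDerivAt (fun y : EE n => H y • Tc n)
      ((fderiv ℝ H x).smulRight (Tc n)) x := hH.hasFDerivAt.smul_const (Tc n)
  have := h1.sub h2
  exact this.congr_of_eventuallyEq (Filter.Eventually.of_forall fun y => pcForm_eq H y)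

lemma fderiv_pcForm_apply (H : EE n → ℝ) (x : EE n) (hH : DifferentiableAt ℝ H x)
    (u v : EE n) :
    fderiv ℝ (pcForm H) x u v = (∑ i, u.2.2 i * v.2.1 i) - fderiv ℝ H x u * v.1 := by
  rw [(hasFDerivAt_pcForm H x hH).fderiv]
  simp [P_apply, Tc]

lemma extDeriv_pcForm (H : EE n → ℝ) (x : EE n) (hH : DifferentiableAt ℝ H x)
    (u v : EE n) :
    extDerivOneForm (pcForm H) x u v = ((∑ i, u.2.2 i * v.2.1 i) - fderiv ℝ H x u * v.1)
      - ((∑ i, v.2.2 i * u.2.1 i) - fderiv ℝ H x v * u.1) := by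
  rw [extDerivOneForm, fderiv_pcForm_apply H x hH, fderiv_pcForm_apply H x hH]

lemma extDeriv_pcForm_ZH (H : EE n → ℝ) (x : EE n) (hH : DifferentiableAt ℝ H x)
    (v : EE n) : extDerivOneForm (pcForm H) x (ZH H x) v = 0 := by
  have hDZ : fderiv ℝ H x (ZH H x)
      = fderiv ℝ H x ((1:ℝ), (0:Fin n → ℝ), (0:Fin n → ℝ)) := by
    rw [clm_decomp (fderiv ℝ H x) (ZH H x)]
    have h0 : (∑ i, (ZH H x).2.1 i * fderiv ℝ H x ((0:ℝ), (Pi.single i 1 : Fin n → ℝ), 0))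
        + ∑ i, (ZH H x).2.2 i * fderiv ℝ H x ((0:ℝ), (0:Fin n → ℝ), Pi.single i 1) = 0 := by
      rw [← Finset.sum_add_distrib]
      apply Finset.sum_eq_zero; intro i _
      show fderiv ℝ H x ((0:ℝ), (0:Fin n → ℝ), Pi.single i 1)
            * fderiv ℝ H x ((0:ℝ), (Pi.single i 1 : Fin n → ℝ), 0)
          + (-(fderiv ℝ H x ((0:ℝ), (Pi.single i 1 : Fin n → ℝ), 0)))
            * fderiv ℝ H x ((0:ℝ), (0:Fin n → ℝ), Pi.single i 1) = 0
      ring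
    rw [show (ZH H x).1 = 1 from rfl, one_mul]
    linear_combination h0
  rw [extDeriv_pcForm H x hH, hDZ, clm_decomp (fderiv ℝ H x) v]
  have hA : (∑ i, (ZH H x).2.2 i * v.2.1 i)
      = -∑ i, v.2.1 i * fderiv ℝ H x ((0:ℝ), (Pi.single i 1 : Fin n → ℝ), 0) := by
    rw [← Finset.sum_neg_distrib]
    refine Finset.sum_congr rfl fun i _ => ?_
    show (-(fderiv ℝ H x ((0:ℝ), (Pi.single i 1 : Fin n → ℝ), 0))) * v.2.1 i = _
    ring
  have hB : (∑ i, v.2.2 i * (ZH H x).2.1 i)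
      = ∑ i, v.2.2 i * fderiv ℝ H x ((0:ℝ), (0:Fin n → ℝ), Pi.single i 1) := rfl
  rw [hA, hB, show (ZH H x).1 = 1 from rfl]
  ring

lemma extDeriv_add_smul (α : EE n → (EE n →L[ℝ] ℝ)) (x u w v : EE n) (c : ℝ) :
    extDerivOneForm α x (u + c • w) v = extDerivOneForm α x u v + c * extDerivOneForm α x w v := by
  simp only [extDerivOneForm, map_add, map_smul, ContinuousLinearMap.add_apply,
    ContinuousLinearMap.smul_apply, smul_eq_mul]
  ring

lemma extDeriv_add (α β : EE n → (EE n →L[ℝ] ℝ)) (x : EE n)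
    (hα : DifferentiableAt ℝ α x) (hβ : DifferentiableAt ℝ β x) (u v : EE n) :
    extDerivOneForm (fun y => α y + β y) x u v = extDerivOneForm α x u v + extDerivOneForm β x u v := by
  simp only [extDerivOneForm, fderiv_fun_add hα hβ, ContinuousLinearMap.add_apply]
  ring

lemma lieDeriv_apply_eq (α : EE n → (EE n →L[ℝ] ℝ)) (ζ : EE n → EE n) (x : EE n)
    (hα : DifferentiableAt ℝ α x) (hζ : DifferentiableAt ℝ ζ x) (v : EE n) :
    lieDeriv ζ α x v = extDerivOneForm α x (ζ x) v + fderiv ℝ (fun y => α y (ζ y)) x v := by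
  rw [fderiv_clm_apply hα hζ]
  simp only [lieDeriv, extDerivOneForm, ContinuousLinearMap.add_apply,
    ContinuousLinearMap.comp_apply, ContinuousLinearMap.flip_apply]
  ring

end NA2

open NA NA2

/-- if `ζ` is a weak Noether symmetry (`L_ζ(α_H + β) = df`, `β` closed)
and `ρ ≠ 0` on an open set `U`, then
`ζ̃ = ζ + ρ⁻¹(β(ζ) − f) • Z_H` is a Noether symmetry on `U` (`L_{ζ̃} α_H = 0`) with the
same conserved quantity: `α_H(ζ̃) = (α_H + β)(ζ) − f`. -/
theorem weak_to_strict_noether {n : ℕ} (hn : 1 ≤ n)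
    (H f : EE n → ℝ) (β : EE n → (EE n →L[ℝ] ℝ)) (ζ : EE n → EE n)
    (hH : ContDiff ℝ ∞ H) (hβ : ContDiff ℝ ∞ β) (hf : ContDiff ℝ ∞ f)
    (hζ : ContDiff ℝ ∞ ζ)
    (hβclosed : ∀ x u v, extDerivOneForm β x u v = 0)
    (hsym : ∀ x, lieDeriv ζ (fun y => pcForm H y + β y) x = fderiv ℝ f x)
    (U : Set (EE n)) (hU : IsOpen U)
    (hρ : ∀ x ∈ U, elemAction H x ≠ 0)
    (ζt : EE n → EE n)
    (hζt : ∀ x, ζt x = ζ x + ((elemAction H x)⁻¹ * (β x (ζ x) - f x)) • ZH H x) :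
    (∀ x ∈ U, lieDeriv ζt (pcForm H) x = 0) ∧
    (∀ x ∈ U, pcForm H x (ζt x) = (pcForm H x + β x) (ζ x) - f x) := by
  have hHd : Differentiable ℝ H := hH.differentiable (by simp)
  have hfderivH : ContDiff ℝ ∞ (fderiv ℝ H) := hH.fderiv_right (by simp)
  have hfd : Differentiable ℝ f := hf.differentiable (by simp)
  have hζd : Differentiable ℝ ζ := hζ.differentiable (by simp)
  have hβd : Differentiable ℝ β := hβ.differentiable (by simp)
  have hZC : ContDiff ℝ ∞ (ZH H) := by
    refine ContDiff.prodMk contDiff_const (ContDiff.prodMk ?_ ?_)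
    · exact contDiff_pi.2 fun i => hfderivH.clm_apply contDiff_const
    · exact contDiff_pi.2 fun i => (hfderivH.clm_apply contDiff_const).neg
  have hZd : Differentiable ℝ (ZH H) := hZC.differentiable (by simp)
  have hαC : ContDiff ℝ ∞ (pcForm H) := by
    have : (pcForm H) = fun y => P n y - H y • Tc n := funext (pcForm_eq H)
    rw [this]
    exact (P n).contDiff.sub (hH.smul contDiff_const)
  have hαd : Differentiable ℝ (pcForm H) := hαC.differentiable (by simp)
  have hρC : ContDiff ℝ ∞ (elemAction H) := by
    have : (elemAction H) = fun y =>
        (∑ j, y.2.2 j * fderiv ℝ H y (0, 0, Pi.single j 1)) - H y := rfl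
    rw [this]
    refine ContDiff.sub ?_ hH
    refine ContDiff.sum fun j _ => ?_
    exact (contDiff_pi.1 (contDiff_snd.comp contDiff_snd) j).mul
      (hfderivH.clm_apply contDiff_const)
  have hρd : Differentiable ℝ (elemAction H) := hρC.differentiable (by simp)
  -- conserved quantity (second claim, and used pointwise for the eventual equality)
  have key2 : ∀ x ∈ U, pcForm H x (ζt x) = pcForm H x (ζ x) + (β x (ζ x) - f x) := by
    intro x hx
    rw [hζt x, map_add, map_smul, pcForm_ZH, smul_eq_mul, mul_assoc,
      mul_comm (β x (ζ x) - f x), ← mul_assoc, inv_mul_cancel₀ (hρ x hx), one_mul]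
  refine ⟨?_, ?_⟩
  · intro x hx
    refine ContinuousLinearMap.ext fun v => ?_
    rw [ContinuousLinearMap.zero_apply]
    -- differentiability of ζt at x
    have hgd : DifferentiableAt ℝ (fun y => β y (ζ y) - f y) x :=
      ((hβd x).clm_apply (hζd x)).sub (hfd x)
    have hcd : DifferentiableAt ℝ
        (fun y => (elemAction H y)⁻¹ * (β y (ζ y) - f y)) x :=
      ((hρd x).inv (hρ x hx)).mul hgd
    have hζtd : DifferentiableAt ℝ ζt x := by
      have : ζt = fun y => ζ y +
          ((elemAction H y)⁻¹ * (β y (ζ y) - f y)) • ZH H y := funext hζt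
      rw [this]
      exact (hζd x).add (hcd.smul (hZd x))
    -- Cartan for ζt
    rw [lieDeriv_apply_eq (pcForm H) ζt x (hαd x) hζtd v]
    -- ext deriv part
    have e1 : extDerivOneForm (pcForm H) x (ζt x) v = extDerivOneForm (pcForm H) x (ζ x) v := by
      rw [hζt x, extDeriv_add_smul, extDeriv_pcForm_ZH H x (hHd x), mul_zero, add_zero]
    -- fderiv part via eventual equality
    have hev : (fun y => pcForm H y (ζt y))
        =ᶠ[nhds x] (fun y => pcForm H y (ζ y) + (β y (ζ y) - f y)) := by
      filter_upwards [hU.mem_nhds hx] with y hy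
      exact key2 y hy
    have hαζ : DifferentiableAt ℝ (fun y => pcForm H y (ζ y)) x :=
      (hαd x).clm_apply (hζd x)
    have e2 : fderiv ℝ (fun y => pcForm H y (ζt y)) x v
        = fderiv ℝ (fun y => pcForm H y (ζ y)) x v
          + (fderiv ℝ (fun y => β y (ζ y)) x v - fderiv ℝ f x v) := by
      rw [hev.fderiv_eq, fderiv_fun_add hαζ hgd,
        fderiv_fun_sub ((hβd x).clm_apply (hζd x)) (hfd x)]
      simp
    rw [e1, e2]
    -- expand the symmetry hypothesis via Cartan
    have hs : lieDeriv ζ (fun y => pcForm H y + β y) x v = fderiv ℝ f x v := by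
      rw [hsym x]
    rw [lieDeriv_apply_eq (fun y => pcForm H y + β y) ζ x ((hαd x).add (hβd x)) (hζd x) v,
      extDeriv_add (pcForm H) β x (hαd x) (hβd x), hβclosed x (ζ x) v, add_zero]
      at hs
    have hfun : (fun y => (pcForm H y + β y) (ζ y))
        = fun y => pcForm H y (ζ y) + β y (ζ y) := by
      funext y; simp
    rw [hfun, fderiv_fun_add hαζ ((hβd x).clm_apply (hζd x))] at hs
    simp only [ContinuousLinearMap.add_apply] at hs
    linear_combination hs
  · intro x hx
    rw [key2 x hx]
    simp only [ContinuousLinearMap.add_apply]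
    ring
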